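/- arXiv:1512.05587 — 3 statements merged into one kernel-verified Lean document; each statement's English description precedes it below -/
import Mathlib

section
/- Let (A_i)_{i∈I} be an inverse system of finite abelian groups over a directed poset I. Then lim← A_i = 0 if and only if for every i ∈ I there exists j ≥ i such that the transition map φ_{ji}: A_j → A_i is the zero map. -/
open CategoryTheory Opposite


/-- An inverse limit of finite abelian groups over a directed poset is zero iff
for every index `i` there is some `j ≥ i` with zero transition map `A j → A i`. -/
theorem inverseLimit_eq_zero_iff
    {I : Type*} [PartialOrder I] [IsDirected I (· ≤ ·)]
    (A : I → Type*) [∀ i, AddCommGroup (A i)] [∀ i, Finite (A i)]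
    (φ : ∀ ⦃i j : I⦄, i ≤ j → A j →+ A i)
    (hid : ∀ i (x : A i), φ (le_refl i) x = x)
    (hcomp : ∀ ⦃i j k : I⦄ (hij : i ≤ j) (hjk : j ≤ k) (x : A k),
      φ hij (φ hjk x) = φ (hij.trans hjk) x) :
    (∀ g : ∀ i, A i, (∀ ⦃i j : I⦄ (h : i ≤ j), φ h (g j) = g i) → g = 0) ↔
      (∀ i : I, ∃ j : I, ∃ h : i ≤ j, ∀ x : A j, φ h x = 0) := by
  constructor
  · intro hlim
    by_contra hc
    push_neg at hc
    obtain ⟨i₀, hi₀⟩ := hc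
    -- hi₀ : ∀ j (h : i₀ ≤ j), ∃ x, φ h x ≠ 0
    classical
    -- the set of images of transition maps into A i₀
    set S : Set (AddSubgroup (A i₀)) :=
      {H | ∃ j : I, ∃ h : i₀ ≤ j, H = (φ h).range} with hS
    have hSne : S.Nonempty := ⟨(φ (le_refl i₀)).range, i₀, le_refl i₀, rfl⟩
    have hSfin : S.Finite := Set.toFinite S
    obtain ⟨Hm, hHmS, hmin⟩ : ∃ a ∈ S, ∀ a' ∈ S, id a' ≤ id a → id a = id a' := by
      obtain ⟨a, ha, hmin'⟩ := hSfin.exists_minimal hSne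
      exact ⟨a, ha, fun a' ha' hle => le_antisymm (hmin' ha' hle) hle⟩
    obtain ⟨jS, hjS, rfl⟩ := hHmS
    -- minimal image is contained in all images
    have key : ∀ (j : I) (h : i₀ ≤ j), ((φ hjS).range : AddSubgroup (A i₀)) ≤ (φ h).range := by
      intro j h
      obtain ⟨m, hjm, hjSm⟩ := directed_of (· ≤ ·) j jS
      have h0m : i₀ ≤ m := h.trans hjm
      have hsub : ∀ (l : I) (hl : i₀ ≤ l) (hlm : l ≤ m),
          ((φ h0m).range : AddSubgroup (A i₀)) ≤ (φ hl).range := by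
        intro l hl hlm
        rintro y ⟨z, rfl⟩
        exact ⟨φ hlm z, by rw [hcomp]⟩
      have heq : ((φ hjS).range : AddSubgroup (A i₀)) = (φ h0m).range :=
        hmin _ ⟨m, h0m, rfl⟩ (hsub jS hjS hjSm)
      rw [heq]
      exact hsub j h hjm
    -- pick a nonzero element of the minimal image
    obtain ⟨z, hz⟩ := hi₀ jS hjS
    set x₀ : A i₀ := φ hjS z with hx₀
    have hx₀ne : x₀ ≠ 0 := hz
    have hx₀mem : ∀ (j : I) (h : i₀ ≤ j), ∃ y : A j, φ h y = x₀ := by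
      intro j h
      exact key j h ⟨z, rfl⟩
    -- the directed index set above i₀
    let J : Type _ := {j : I // i₀ ≤ j}
    haveI : IsDirected J (· ≤ ·) := ⟨by
      rintro ⟨a, ha⟩ ⟨b, hb⟩
      obtain ⟨m, ham, hbm⟩ := directed_of (· ≤ ·) a b
      exact ⟨⟨m, ha.trans ham⟩, ham, hbm⟩⟩
    -- the inverse system of fibers over x₀
    let F : Jᵒᵖ ⥤ Type _ :=
      { obj := fun j => {y : A j.unop.1 // φ j.unop.2 y = x₀}
        map := fun {j k} f => TypeCat.ofHom fun y => ⟨φ (leOfHom f.unop) y.1, by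
          rw [hcomp]; exact y.2⟩
        map_id := by intro j; ext y; exact hid _ y.1
        map_comp := by intro j k l f g; ext y; exact (hcomp _ _ y.1).symm }
    haveI : ∀ j : Jᵒᵖ, Finite (F.obj j) := fun j => Subtype.finite
    haveI : ∀ j : Jᵒᵖ, Nonempty (F.obj j) := by
      intro j
      obtain ⟨y, hy⟩ := hx₀mem j.unop.1 j.unop.2
      exact ⟨⟨y, hy⟩⟩
    obtain ⟨u, hu⟩ := nonempty_sections_of_finite_inverse_system F
    -- section compatibility in concrete form
    have husec : ∀ (a b : J) (hab : a ≤ b), φ hab (u (op b)).1 = (u (op a)).1 := by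
      intro a b hab
      exact congrArg Subtype.val (hu ((homOfLE hab).op : op b ⟶ op a))
    -- well-definedness of the extension
    have L : ∀ (i k k' : I) (hk : i ≤ k) (hk' : i ≤ k') (h0 : i₀ ≤ k) (h0' : i₀ ≤ k'),
        φ hk (u (op ⟨k, h0⟩)).1 = φ hk' (u (op ⟨k', h0'⟩)).1 := by
      intro i k k' hk hk' h0 h0'
      obtain ⟨m, hkm, hk'm⟩ := directed_of (· ≤ ·) k k'
      have h0m : i₀ ≤ m := h0.trans hkm
      rw [← husec ⟨k, h0⟩ ⟨m, h0m⟩ hkm, ← husec ⟨k', h0'⟩ ⟨m, h0m⟩ hk'm,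
        hcomp, hcomp]
    -- extend the section to all of I
    have hch : ∀ i : I, ∃ k : I, i ≤ k ∧ i₀ ≤ k := fun i => by
      obtain ⟨m, h1, h2⟩ := directed_of (· ≤ ·) i i₀; exact ⟨m, h1, h2⟩
    choose κ hκ1 hκ2 using hch
    set g : ∀ i, A i := fun i => φ (hκ1 i) (u (op ⟨κ i, hκ2 i⟩)).1 with hg
    have hgcomp : ∀ ⦃i j : I⦄ (h : i ≤ j), φ h (g j) = g i := by
      intro i j h
      show φ h (φ (hκ1 j) (u (op ⟨κ j, hκ2 j⟩)).1) = _
      rw [hcomp]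
      exact L i (κ j) (κ i) (h.trans (hκ1 j)) (hκ1 i) (hκ2 j) (hκ2 i)
    have hgi₀ : g i₀ = x₀ := by
      show φ (hκ1 i₀) (u (op ⟨κ i₀, hκ2 i₀⟩)).1 = x₀
      exact (u (op ⟨κ i₀, hκ2 i₀⟩)).2
    have := hlim g hgcomp
    rw [this] at hgi₀
    exact hx₀ne hgi₀.symm
  · intro h g hg
    funext i
    obtain ⟨j, hij, hj0⟩ := h i
    rw [← hg hij, hj0]
    rfl
end

section
/- Let Γ be a profinite group fitting in a short exact sequence 1 → Ẑ² → Γ → Ẑ → 1 of profinite groups, where Ẑ² is central in Γ. Then for all n ≥ 1, H¹(Γ; ℤ/n) ≅ (ℤ/n)³, where ℤ/n carries the trivial Γ-action. -/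
/-- The ring of profinite integers `Ẑ`, as the subring of compatible families in
`∏ₙ ℤ/n`. -/
def ZHat : Subring (∀ n : ℕ+, ZMod n) where
  carrier := {x | ∀ (m n : ℕ+) (h : (m : ℕ) ∣ (n : ℕ)), ZMod.castHom h (ZMod m) (x n) = x m}
  zero_mem' := by intro m n h; exact map_zero (ZMod.castHom h (ZMod (m : ℕ)))
  one_mem' := by intro m n h; exact map_one (ZMod.castHom h (ZMod (m : ℕ)))
  add_mem' := by
    intro a b ha hb m n h
    simp only [Pi.add_apply, map_add, ha m n h, hb m n h]
  mul_mem' := by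
    intro a b ha hb m n h
    simp only [Pi.mul_apply, map_mul, ha m n h, hb m n h]
  neg_mem' := by
    intro a ha m n h
    simp only [Pi.neg_apply, map_neg, ha m n h]

/-- Reduction `Ẑ → ℤ/n`. -/
def ZHat.proj (n : ℕ+) : ZHat →+* ZMod n := (Pi.evalRingHom _ n).comp ZHat.subtype

instance (n : ℕ+) : TopologicalSpace (ZMod n) := ⊥
instance (n : ℕ+) : DiscreteTopology (ZMod n) := ⟨rfl⟩
instance : TopologicalSpace ZHat := instTopologicalSpaceSubtype

instance (n : ℕ) : TopologicalSpace (Multiplicative (ZMod n)) := ⊥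
instance (n : ℕ) : DiscreteTopology (Multiplicative (ZMod n)) := ⟨rfl⟩
instance (n : ℕ) : IsTopologicalGroup (Multiplicative (ZMod n)) where
  continuous_mul := continuous_of_discreteTopology
  continuous_inv := continuous_of_discreteTopology

lemma ZHat.ext' {x y : ZHat} (h : ∀ m : ℕ+, (x : ∀ k : ℕ+, ZMod k) m = (y : ∀ k : ℕ+, ZMod k) m) : x = y :=
  Subtype.ext (funext h)

lemma ZHat.coe_natCast (m : ℕ) (k : ℕ+) : ((m : ZHat) : ∀ j : ℕ+, ZMod j) k = (m : ZMod k) := by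
  have : ((m : ZHat) : ∀ j : ℕ+, ZMod j) = (m : ∀ j : ℕ+, ZMod j) := map_natCast ZHat.subtype m
  rw [this]; rfl

lemma ZHat.coe_intCast (m : ℤ) (k : ℕ+) : ((m : ZHat) : ∀ j : ℕ+, ZMod j) k = (m : ZMod k) := by
  have : ((m : ZHat) : ∀ j : ℕ+, ZMod j) = (m : ∀ j : ℕ+, ZMod j) := map_intCast ZHat.subtype m
  rw [this]; rfl

lemma ZHat.compat (x : ZHat) (m k : ℕ+) (h : (m : ℕ) ∣ (k : ℕ)) :
    ZMod.castHom h (ZMod m) ((x : ∀ j : ℕ+, ZMod j) k) = (x : ∀ j : ℕ+, ZMod j) m := x.2 m k h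

lemma ZHat.coe_mul (x y : ZHat) (k : ℕ+) :
    ((x * y : ZHat) : ∀ j : ℕ+, ZMod j) k
      = (x : ∀ j : ℕ+, ZMod j) k * (y : ∀ j : ℕ+, ZMod j) k := rfl


lemma ZHat.coe_sub (x y : ZHat) (k : ℕ+) :
    ((x - y : ZHat) : ∀ j : ℕ+, ZMod j) k
      = (x : ∀ j : ℕ+, ZMod j) k - (y : ∀ j : ℕ+, ZMod j) k := rfl

lemma ZHat.torsionfree (N : ℕ+) (x : ZHat) (h : ((N : ℕ) : ZHat) * x = 0) : x = 0 := by
  apply ZHat.ext'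
  intro m
  have hNm : (m : ℕ) ∣ ((N * m : ℕ+) : ℕ) := by
    rw [PNat.mul_coe]; exact Dvd.intro_left _ rfl
  have hx : (x : ∀ j : ℕ+, ZMod j) m
      = ZMod.castHom hNm (ZMod m) ((x : ∀ j : ℕ+, ZMod j) (N * m)) :=
    (ZHat.compat x m (N * m) hNm).symm
  have h0 : ((N : ℕ) : ZMod ((N * m : ℕ+) : ℕ)) * ((x : ∀ j : ℕ+, ZMod j) (N * m)) = 0 := by
    have := congrArg (fun z : ZHat => (z : ∀ j : ℕ+, ZMod j) (N * m)) h
    simpa [ZHat.coe_mul, ZHat.coe_natCast] using this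
  have h1 : (((N : ℕ) * ((x : ∀ j : ℕ+, ZMod j) (N * m)).val : ℕ) : ZMod ((N * m : ℕ+) : ℕ)) = 0 := by
    rw [Nat.cast_mul]
    rw [ZMod.natCast_val, ZMod.cast_id]
    exact h0
  have h2 : ((N * m : ℕ+) : ℕ) ∣ (N : ℕ) * ((x : ∀ j : ℕ+, ZMod j) (N * m)).val :=
    (ZMod.natCast_eq_zero_iff _ _).mp h1
  have h4 : (N : ℕ) * (m : ℕ) ∣ (N : ℕ) * ((x : ∀ j : ℕ+, ZMod j) (N * m)).val := by
    rw [← PNat.mul_coe]; exact h2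
  have h3 : (m : ℕ) ∣ ((x : ∀ j : ℕ+, ZMod j) (N * m)).val :=
    (mul_dvd_mul_iff_left (a := (N:ℕ)) (by positivity)).mp h4
  calc (x : ∀ j : ℕ+, ZMod j) m
      = ZMod.castHom hNm (ZMod m) ((x : ∀ j : ℕ+, ZMod j) (N * m)) := hx
    _ = ((((x : ∀ j : ℕ+, ZMod j) (N * m)).val : ℕ) : ZMod m) := by
        rw [ZMod.castHom_apply, ← ZMod.natCast_val]
    _ = 0 := (ZMod.natCast_eq_zero_iff _ _).mpr h3
    _ = ((0 : ZHat) : ∀ j : ℕ+, ZMod j) m := rfl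

lemma ZHat.exists_of_proj_eq_zero (N : ℕ+) (x : ZHat) (h : (x : ∀ j : ℕ+, ZMod j) N = 0) :
    ∃ y : ZHat, x = ((N : ℕ) : ZHat) * y := by
  have hNd : ∀ m : ℕ+, ((N : ℕ)) ∣ ((N * m : ℕ+) : ℕ) := fun m => by
    rw [PNat.mul_coe]; exact Dvd.intro _ rfl
  have hmd : ∀ m : ℕ+, ((m : ℕ)) ∣ ((N * m : ℕ+) : ℕ) := fun m => by
    rw [PNat.mul_coe]; exact Dvd.intro_left _ rfl
  have hdvd : ∀ m : ℕ+, (N : ℕ) ∣ ((x : ∀ j : ℕ+, ZMod j) (N * m)).val := by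
    intro m
    have := ZHat.compat x N (N * m) (hNd m)
    rw [h, ZMod.castHom_apply, ← ZMod.natCast_val] at this
    exact (ZMod.natCast_eq_zero_iff _ _).mp this
  refine ⟨⟨fun m => ((((x : ∀ j : ℕ+, ZMod j) (N * m)).val / (N : ℕ) : ℕ) : ZMod m), ?_⟩, ?_⟩
  · -- compatibility
    intro m k hmk
    simp only [map_natCast]
    have hNmk : ((N * m : ℕ+) : ℕ) ∣ ((N * k : ℕ+) : ℕ) := by
      rw [PNat.mul_coe, PNat.mul_coe]; exact mul_dvd_mul_left _ hmk
    have hcompat := ZHat.compat x (N * m) (N * k) hNmk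
    have hcast : (ZMod.castHom hNmk (ZMod ((N * m : ℕ+) : ℕ))) ((x : ∀ j : ℕ+, ZMod j) (N * k))
        = ((((x : ∀ j : ℕ+, ZMod j) (N * k)).val : ℕ) : ZMod ((N * m : ℕ+) : ℕ)) := by
      rw [ZMod.castHom_apply, ← ZMod.natCast_val]
    have hAA : ((x : ∀ j : ℕ+, ZMod j) (N * m)).val
        = ((x : ∀ j : ℕ+, ZMod j) (N * k)).val % ((N * m : ℕ+) : ℕ) := by
      rw [← hcompat, hcast, ZMod.val_natCast]
    set A : ℕ := ((x : ∀ j : ℕ+, ZMod j) (N * m)).val with hA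
    set A' : ℕ := ((x : ∀ j : ℕ+, ZMod j) (N * k)).val with hA'
    have hq : A' = (N : ℕ) * ((m : ℕ) * (A' / ((N * m : ℕ+) : ℕ))) + A := by
      have := Nat.div_add_mod A' ((N * m : ℕ+) : ℕ)
      rw [← hAA] at this
      conv_lhs => rw [← this]
      rw [PNat.mul_coe]
      ring
    have hdivN : A' / (N : ℕ) = (m : ℕ) * (A' / ((N * m : ℕ+) : ℕ)) + A / (N : ℕ) := by
      conv_lhs => rw [hq]
      rw [Nat.mul_add_div (by positivity)]
    rw [hdivN]
    push_cast
    simp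
  · -- x = N * y
    apply ZHat.ext'
    intro m
    rw [ZHat.coe_mul, ZHat.coe_natCast]
    show (x : ∀ j : ℕ+, ZMod j) m
      = ((N : ℕ) : ZMod m) * ((((x : ∀ j : ℕ+, ZMod j) (N * m)).val / (N : ℕ) : ℕ) : ZMod m)
    have : ((N : ℕ) : ZMod m) * ((((x : ∀ j : ℕ+, ZMod j) (N * m)).val / (N : ℕ) : ℕ) : ZMod m)
        = ((((x : ∀ j : ℕ+, ZMod j) (N * m)).val : ℕ) : ZMod m) := by
      rw [← Nat.cast_mul, Nat.mul_div_cancel' (hdvd m)]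
    have hc := ZHat.compat x m (N * m) (hmd m)
    rw [ZMod.castHom_apply, ← ZMod.natCast_val] at hc
    rw [this, hc]

lemma ZHat.sub_exists (N : ℕ+) (a b : ZHat)
    (h : (a : ∀ j : ℕ+, ZMod j) N = (b : ∀ j : ℕ+, ZMod j) N) :
    ∃ y : ZHat, a = b + ((N : ℕ) : ZHat) * y := by
  obtain ⟨y, hy⟩ := ZHat.exists_of_proj_eq_zero N (a - b) (by
    show (a : ∀ j : ℕ+, ZMod j) N - (b : ∀ j : ℕ+, ZMod j) N = 0
    rw [h, sub_self])
  exact ⟨y, by rw [← hy]; ring⟩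

lemma ZHat.mem_closure_intCast (x : ZHat) :
    x ∈ closure (Set.range (fun m : ℤ => (m : ZHat))) := by
  rw [mem_closure_iff]
  intro o ho hxo
  rw [isOpen_induced_iff] at ho
  obtain ⟨V, hV, rfl⟩ := ho
  obtain ⟨I, u, hu, hsub⟩ := isOpen_pi_iff.mp hV (x : ∀ j : ℕ+, ZMod j) hxo
  -- take the product of the indices in I
  set P : ℕ+ := ∏ i ∈ I, i with hP
  have hdvd : ∀ i ∈ I, (i : ℕ) ∣ (P : ℕ) := by
    intro i hi
    exact PNat.dvd_iff.mp (Finset.dvd_prod_of_mem _ hi)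
  set mz : ℤ := ((((x : ∀ j : ℕ+, ZMod j) P).val : ℕ) : ℤ) with hmz
  refine ⟨(mz : ZHat), ?_, ⟨mz, rfl⟩⟩
  apply hsub
  intro i hi
  have h1 : ((mz : ZHat) : ∀ j : ℕ+, ZMod j) i = (x : ∀ j : ℕ+, ZMod j) i := by
    rw [ZHat.coe_intCast, hmz]
    push_cast
    rw [ZMod.natCast_val, ← ZMod.castHom_apply (h := hdvd i hi), ZHat.compat]
  rw [h1]
  exact (hu i hi).2

lemma ZHat.mult_subgroup_eq_top (S : Subgroup (Multiplicative ZHat))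
    (hc : IsClosed (S : Set (Multiplicative ZHat)))
    (h1 : Multiplicative.ofAdd (1 : ZHat) ∈ S) : S = ⊤ := by
  rw [Subgroup.eq_top_iff']
  intro s
  have hsub : Set.range (fun m : ℤ => Multiplicative.ofAdd ((m : ZHat))) ⊆ (S : Set _) := by
    rintro _ ⟨m, rfl⟩
    have : Multiplicative.ofAdd ((m : ZHat)) = (Multiplicative.ofAdd (1 : ZHat)) ^ m := by
      rw [← ofAdd_zsmul]
      norm_num
    simp only []
    rw [this]
    exact zpow_mem h1 m
  have hx : s ∈ closure (Set.range (fun m : ℤ => Multiplicative.ofAdd ((m : ZHat)))) :=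
    ZHat.mem_closure_intCast (Multiplicative.toAdd s)
  exact hc.closure_subset (closure_mono hsub hx)

lemma ZHat.mem_closure_intCast2 (x : ZHat × ZHat) :
    x ∈ closure (Set.range (fun p : ℤ × ℤ => ((p.1 : ZHat), (p.2 : ZHat)))) := by
  have : Set.range (fun p : ℤ × ℤ => ((p.1 : ZHat), (p.2 : ZHat)))
      = (Set.range (fun m : ℤ => (m : ZHat))) ×ˢ (Set.range (fun m : ℤ => (m : ZHat))) := by
    ext p
    simp [Set.mem_prod, Prod.ext_iff]
  rw [this, closure_prod_eq]
  exact ⟨ZHat.mem_closure_intCast x.1, ZHat.mem_closure_intCast x.2⟩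

lemma ZHat.mult_subgroup2_eq_top (S : Subgroup (Multiplicative (ZHat × ZHat)))
    (hc : IsClosed (S : Set (Multiplicative (ZHat × ZHat))))
    (h1 : Multiplicative.ofAdd ((1 : ZHat), (0 : ZHat)) ∈ S)
    (h2 : Multiplicative.ofAdd ((0 : ZHat), (1 : ZHat)) ∈ S) : S = ⊤ := by
  rw [Subgroup.eq_top_iff']
  intro s
  have hsub : Set.range (fun p : ℤ × ℤ =>
      Multiplicative.ofAdd (((p.1 : ZHat), (p.2 : ZHat)) : ZHat × ZHat)) ⊆ (S : Set _) := by
    rintro _ ⟨p, rfl⟩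
    have : Multiplicative.ofAdd (((p.1 : ZHat), (p.2 : ZHat)) : ZHat × ZHat)
        = (Multiplicative.ofAdd ((1 : ZHat), (0 : ZHat))) ^ p.1
          * (Multiplicative.ofAdd ((0 : ZHat), (1 : ZHat))) ^ p.2 := by
      rw [← ofAdd_zsmul, ← ofAdd_zsmul, ← ofAdd_add]
      congr 1
      simp [Prod.ext_iff]
    simp only []
    rw [this]
    exact mul_mem (zpow_mem h1 p.1) (zpow_mem h2 p.2)
  have hx : s ∈ closure (Set.range (fun p : ℤ × ℤ =>
      Multiplicative.ofAdd (((p.1 : ZHat), (p.2 : ZHat)) : ZHat × ZHat))) :=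
    ZHat.mem_closure_intCast2 (Multiplicative.toAdd s)
  exact hc.closure_subset (closure_mono hsub hx)

set_option maxHeartbeats 3000000 in
/-- If a profinite group `Γ` is a central extension `1 → Ẑ² → Γ → Ẑ → 1`, then for
every `n ≥ 1` the first continuous cohomology `H¹(Γ; ℤ/n) = Hom_cont(Γ, ℤ/n)` with
trivial coefficients is isomorphic to `(ℤ/n)³`. -/
theorem h1_of_central_extension_zhat
    (Γ : Type*) [Group Γ] [TopologicalSpace Γ] [IsTopologicalGroup Γ]
    [CompactSpace Γ] [T2Space Γ] [TotallyDisconnectedSpace Γ]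
    (f : Multiplicative (ZHat × ZHat) →* Γ) (g : Γ →* Multiplicative ZHat)
    (hf_cont : Continuous f) (hg_cont : Continuous g)
    (hf_inj : Function.Injective f) (hg_surj : Function.Surjective g)
    (hexact : f.range = g.ker)
    (hcentral : ∀ a, f a ∈ Subgroup.center Γ)
    (n : ℕ) (hn : 1 ≤ n) :
    Nonempty (ContinuousMonoidHom Γ (Multiplicative (ZMod n)) ≃*
      Multiplicative (ZMod n × ZMod n × ZMod n)) := by
  haveI : NeZero n := ⟨by omega⟩
  haveI : T2Space (Multiplicative ZHat) := inferInstanceAs (T2Space ZHat)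
  obtain ⟨γ, hγ⟩ := hg_surj (Multiplicative.ofAdd (1 : ZHat))
  -- Main lemma: a closed subgroup containing ker g and γ is everything
  have hL : ∀ H : Subgroup Γ, IsClosed (H : Set Γ) → g.ker ≤ H → γ ∈ H → ∀ x, x ∈ H := by
    intro H hHc hHker hHγ x
    set S : Subgroup (Multiplicative ZHat) := Subgroup.map g H with hSdef
    have hScomp : IsCompact (S : Set (Multiplicative ZHat)) := by
      have hcH : IsCompact (H : Set Γ) := hHc.isCompact
      have := hcH.image hg_cont
      simpa [hSdef, Subgroup.coe_map] using this
    have hSc : IsClosed (S : Set (Multiplicative ZHat)) := hScomp.isClosed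
    have h1S : Multiplicative.ofAdd (1 : ZHat) ∈ S := ⟨γ, hHγ, hγ⟩
    have hS : S = ⊤ := ZHat.mult_subgroup_eq_top S hSc h1S
    have hgx : g x ∈ S := by rw [hS]; exact Subgroup.mem_top _
    obtain ⟨h, hh, hgh⟩ := hgx
    have hker : x * h⁻¹ ∈ g.ker := by
      rw [MonoidHom.mem_ker, map_mul, map_inv, hgh, mul_inv_cancel]
    have := mul_mem (hHker hker) hh
    simpa using this
  -- ker g is central
  have hkerf : ∀ x, x ∈ g.ker → x ∈ Subgroup.center Γ := by
    intro x hx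
    rw [← hexact] at hx
    obtain ⟨a, rfl⟩ := hx
    exact hcentral a
  -- γ is central
  have hγcent : γ ∈ Subgroup.centralizer {γ} := by
    rw [Subgroup.mem_centralizer_iff]
    rintro y rfl; rfl
  have hcentclosed : IsClosed ((Subgroup.centralizer {γ} : Subgroup Γ) : Set Γ) := by
    have : ((Subgroup.centralizer {γ} : Subgroup Γ) : Set Γ) = {x | γ * x = x * γ} := by
      ext x
      rw [SetLike.mem_coe, Subgroup.mem_centralizer_iff]
      constructor
      · intro h; exact (h γ rfl)
      · rintro h y rfl; exact h
    rw [this]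
    exact isClosed_eq (continuous_const.mul continuous_id) (continuous_id.mul continuous_const)
  have hγZ : ∀ y : Γ, γ * y = y * γ := by
    intro y
    have hy := hL (Subgroup.centralizer {γ}) hcentclosed
      (fun x hx => Subgroup.center_le_centralizer _ (hkerf x hx)) hγcent y
    rw [Subgroup.mem_centralizer_iff] at hy
    exact hy γ rfl
  -- Γ is commutative
  have hcomm : ∀ x y : Γ, x * y = y * x := by
    have hcc : IsClosed ((Subgroup.center Γ : Subgroup Γ) : Set Γ) := by
      have : ((Subgroup.center Γ : Subgroup Γ) : Set Γ) = ⋂ y : Γ, {x | y * x = x * y} := by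
        ext x
        simp [SetLike.mem_coe, Subgroup.mem_center_iff, Set.mem_iInter]
      rw [this]
      exact isClosed_iInter fun y =>
        isClosed_eq (continuous_const.mul continuous_id) (continuous_id.mul continuous_const)
    have hγc : γ ∈ Subgroup.center Γ := by
      rw [Subgroup.mem_center_iff]
      intro y; exact (hγZ y).symm
    intro x y
    have hx := hL (Subgroup.center Γ) hcc (fun z hz => hkerf z hz) hγc x
    rw [Subgroup.mem_center_iff] at hx
    exact (hx y).symm
  letI : CommGroup Γ := { (inferInstance : Group Γ) with mul_comm := hcomm }
  set N : ℕ+ := ⟨n, hn⟩ with hNdef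
  -- the subgroup of n-th powers
  set K : Subgroup Γ := (powMonoidHom n : Γ →* Γ).range with hKdef
  haveI : K.Normal := Subgroup.normal_of_comm K
  have hKpow : ∀ x : Γ, x ^ n ∈ K := fun x => ⟨x, rfl⟩
  -- congruence lemmas in Γ ⧸ K
  have hcongγ : ∀ j k : ℤ, ((j : ZMod n) = (k : ZMod n)) →
      (QuotientGroup.mk (γ ^ j) : Γ ⧸ K) = QuotientGroup.mk (γ ^ k) := by
    intro j k hjk
    rw [QuotientGroup.eq]
    obtain ⟨t, ht⟩ : (n : ℤ) ∣ (k - j) := by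
      rw [ZMod.intCast_eq_intCast_iff] at hjk
      exact Int.ModEq.dvd hjk
    have : (γ ^ j)⁻¹ * γ ^ k = γ ^ (k - j) := by
      rw [← zpow_neg, ← zpow_add, neg_add_eq_sub]
    rw [this, ht, mul_comm (n : ℤ) t, zpow_mul, zpow_natCast]
    exact hKpow _
  have hNn : ((N : ℕ) : ZHat) = ((n : ℕ) : ZHat) := rfl
  have hcongf : ∀ z w : ZHat × ZHat,
      (∃ y : ZHat, w.1 = z.1 + ((N : ℕ) : ZHat) * y) →
      (∃ y : ZHat, w.2 = z.2 + ((N : ℕ) : ZHat) * y) →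
      (QuotientGroup.mk (f (Multiplicative.ofAdd z)) : Γ ⧸ K)
        = QuotientGroup.mk (f (Multiplicative.ofAdd w)) := by
    rintro z w ⟨y1, hy1⟩ ⟨y2, hy2⟩
    rw [QuotientGroup.eq]
    have hsum : (Multiplicative.ofAdd z)⁻¹ * Multiplicative.ofAdd w
        = Multiplicative.ofAdd (n • ((y1, y2) : ZHat × ZHat)) := by
      rw [← ofAdd_neg, ← ofAdd_add]
      congr 1
      refine Prod.ext ?_ ?_
      · show -z.1 + w.1 = n • y1
        rw [nsmul_eq_mul, hy1, ← hNn]; ring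
      · show -z.2 + w.2 = n • y2
        rw [nsmul_eq_mul, hy2, ← hNn]; ring
    rw [← map_inv, ← map_mul, hsum, ofAdd_nsmul, map_pow]
    exact hKpow _
  -- the basic building map
  set Θ : ℤ → ℤ → ℤ → Γ ⧸ K := fun j k l =>
    QuotientGroup.mk (f (Multiplicative.ofAdd ((j : ZHat), (k : ZHat))) * γ ^ l) with hΘdef
  have hΘmul : ∀ j j' k k' l l' : ℤ,
      Θ (j + j') (k + k') (l + l') = Θ j k l * Θ j' k' l' := by
    intro j j' k k' l l'
    simp only [hΘdef]
    rw [← QuotientGroup.mk_mul]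
    congr 1
    have : Multiplicative.ofAdd (((j + j' : ℤ) : ZHat), ((k + k' : ℤ) : ZHat))
        = Multiplicative.ofAdd ((j : ZHat), (k : ZHat))
          * Multiplicative.ofAdd ((j' : ZHat), (k' : ZHat)) := by
      rw [← ofAdd_add]
      congr 1
      refine Prod.ext ?_ ?_
      · show ((j + j' : ℤ) : ZHat) = (j : ZHat) + (j' : ZHat); push_cast; ring
      · show ((k + k' : ℤ) : ZHat) = (k : ZHat) + (k' : ZHat); push_cast; ring
    rw [this, map_mul, zpow_add]
    rw [mul_mul_mul_comm]
  have hvc : ∀ a : ZMod n, ((a.val : ℤ) : ZMod n) = a := by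
    intro a
    push_cast
    rw [ZMod.natCast_val, ZMod.cast_id]
  have hΘcong : ∀ j j' k k' l l' : ℤ, ((j : ZMod n) = (j' : ZMod n)) →
      ((k : ZMod n) = (k' : ZMod n)) → ((l : ZMod n) = (l' : ZMod n)) →
      Θ j k l = Θ j' k' l' := by
    intro j j' k k' l l' hj hk hl
    simp only [hΘdef]
    have e1 : (QuotientGroup.mk (f (Multiplicative.ofAdd ((j : ZHat), (k : ZHat)))) : Γ ⧸ K)
        = QuotientGroup.mk (f (Multiplicative.ofAdd ((j' : ZHat), (k' : ZHat)))) := by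
      apply hcongf
      · refine ZHat.sub_exists N ((j' : ℤ) : ZHat) ((j : ℤ) : ZHat) ?_
        rw [ZHat.coe_intCast, ZHat.coe_intCast]
        exact hj.symm
      · refine ZHat.sub_exists N ((k' : ℤ) : ZHat) ((k : ℤ) : ZHat) ?_
        rw [ZHat.coe_intCast, ZHat.coe_intCast]
        exact hk.symm
    rw [QuotientGroup.mk_mul, QuotientGroup.mk_mul, e1, hcongγ l l' hl]
  -- θ : (ℤ/n)³ → Γ⧸K
  have key : ∀ a b c a' b' c' : ZMod n,
      Θ (((a + a').val : ℤ)) (((b + b').val : ℤ)) (((c + c').val : ℤ))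
        = Θ (a.val : ℤ) (b.val : ℤ) (c.val : ℤ) * Θ (a'.val : ℤ) (b'.val : ℤ) (c'.val : ℤ) := by
    intro a b c a' b' c'
    rw [← hΘmul]
    apply hΘcong <;>
      · rw [hvc]
        push_cast
        rw [ZMod.natCast_val, ZMod.natCast_val, ZMod.cast_id, ZMod.cast_id]
  set θfun : Multiplicative (ZMod n × ZMod n × ZMod n) → Γ ⧸ K := fun u =>
    Θ (((Multiplicative.toAdd u).1.val : ℤ)) (((Multiplicative.toAdd u).2.1.val : ℤ))
      (((Multiplicative.toAdd u).2.2.val : ℤ)) with hθfun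
  have hθmul : ∀ u v, θfun (u * v) = θfun u * θfun v := by
    intro u v
    exact key (Multiplicative.toAdd u).1 (Multiplicative.toAdd u).2.1
      (Multiplicative.toAdd u).2.2 (Multiplicative.toAdd v).1 (Multiplicative.toAdd v).2.1
      (Multiplicative.toAdd v).2.2
  set θ : Multiplicative (ZMod n × ZMod n × ZMod n) →* Γ ⧸ K := MonoidHom.mk' θfun hθmul
    with hθdef
  -- injectivity of θ
  have hθinj : Function.Injective θ := by
    rw [injective_iff_map_eq_one]
    intro u hu
    set a := (Multiplicative.toAdd u).1 with ha
    set b := (Multiplicative.toAdd u).2.1 with hb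
    set c := (Multiplicative.toAdd u).2.2 with hc
    have hu' : (QuotientGroup.mk (f (Multiplicative.ofAdd (((a.val : ℤ) : ZHat),
        ((b.val : ℤ) : ZHat))) * γ ^ ((c.val : ℤ))) : Γ ⧸ K) = 1 := hu
    rw [QuotientGroup.eq_one_iff] at hu'
    obtain ⟨x, hx⟩ := hu'
    have hx : x ^ n = f (Multiplicative.ofAdd (((a.val : ℤ) : ZHat), ((b.val : ℤ) : ZHat)))
        * γ ^ ((c.val : ℤ)) := hx
    have hgf : g (f (Multiplicative.ofAdd (((a.val : ℤ) : ZHat), ((b.val : ℤ) : ZHat)))) = 1 := by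
      have hmem : f (Multiplicative.ofAdd (((a.val : ℤ) : ZHat), ((b.val : ℤ) : ZHat)))
          ∈ f.range := ⟨_, rfl⟩
      rw [hexact] at hmem
      exact hmem
    have hgx := congrArg g hx
    rw [map_mul, map_pow, map_zpow, hγ, hgf, one_mul] at hgx
    -- pass to additive
    have hadd : n • (Multiplicative.toAdd (g x)) = ((c.val : ℤ) : ZHat) := by
      have := congrArg Multiplicative.toAdd hgx
      rw [toAdd_pow, toAdd_zpow] at this
      rw [this, toAdd_ofAdd, zsmul_eq_mul, mul_one]
    -- project to level N : c = 0
    have hc0 : c = 0 := by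
      have hp := congrArg (fun z : ZHat => (z : ∀ j : ℕ+, ZMod j) N) hadd
      rw [ZHat.coe_intCast] at hp
      have hlhs : (((n • (Multiplicative.toAdd (g x)) : ZHat)) : ∀ j : ℕ+, ZMod j) N = 0 := by
        rw [nsmul_eq_mul, ZHat.coe_mul, ZHat.coe_natCast]
        have : ((n : ℕ) : ZMod (N : ℕ)) = 0 := by
          exact_mod_cast ZMod.natCast_self n
        rw [this, zero_mul]
      rw [hlhs] at hp
      have : ((c.val : ℤ) : ZMod n) = 0 := hp.symm
      rwa [hvc] at this
    have hcval : (c.val : ℤ) = 0 := by rw [hc0, ZMod.val_zero]; rfl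
    rw [hcval, zpow_zero, mul_one] at hx
    -- torsionfreeness : g x = 1
    have ht0 : Multiplicative.toAdd (g x) = 0 := by
      apply ZHat.torsionfree N
      have : ((n : ℕ) : ZHat) * Multiplicative.toAdd (g x) = ((c.val : ℤ) : ZHat) := by
        rw [← nsmul_eq_mul]; exact hadd
      rw [hNn, this, hcval]
      norm_num
    have hxker : x ∈ g.ker := by
      rw [MonoidHom.mem_ker]
      have : g x = Multiplicative.ofAdd (0 : ZHat) := by
        rw [← ht0, ofAdd_toAdd]
      rw [this, ofAdd_zero]
    rw [← hexact] at hxker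
    obtain ⟨v, hv⟩ := hxker
    rw [← hv, ← map_pow] at hx
    have hvx := hf_inj hx.symm
    -- components
    have hcomp : (((a.val : ℤ) : ZHat), ((b.val : ℤ) : ZHat)) = n • Multiplicative.toAdd v := by
      have := congrArg Multiplicative.toAdd hvx
      rwa [toAdd_pow, toAdd_ofAdd] at this
    have ha0 : a = 0 := by
      have h1 := congrArg (fun p : ZHat × ZHat => ((p.1 : ∀ j : ℕ+, ZMod j) N)) hcomp
      rw [ZHat.coe_intCast] at h1
      have h2 : (((n • Multiplicative.toAdd v).1 : ZHat) : ∀ j : ℕ+, ZMod j) N = 0 := by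
        have : (n • Multiplicative.toAdd v).1 = ((n : ℕ) : ZHat) * (Multiplicative.toAdd v).1 := by
          show n • (Multiplicative.toAdd v).1 = _
          rw [nsmul_eq_mul]
        rw [this, ZHat.coe_mul, ZHat.coe_natCast]
        have hz : ((n : ℕ) : ZMod (N : ℕ)) = 0 := by exact_mod_cast ZMod.natCast_self n
        rw [hz, zero_mul]
      rw [h2] at h1
      have : ((a.val : ℤ) : ZMod n) = 0 := h1
      rwa [hvc] at this
    have hb0 : b = 0 := by
      have h1 := congrArg (fun p : ZHat × ZHat => ((p.2 : ∀ j : ℕ+, ZMod j) N)) hcomp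
      rw [ZHat.coe_intCast] at h1
      have h2 : (((n • Multiplicative.toAdd v).2 : ZHat) : ∀ j : ℕ+, ZMod j) N = 0 := by
        have : (n • Multiplicative.toAdd v).2 = ((n : ℕ) : ZHat) * (Multiplicative.toAdd v).2 := by
          show n • (Multiplicative.toAdd v).2 = _
          rw [nsmul_eq_mul]
        rw [this, ZHat.coe_mul, ZHat.coe_natCast]
        have hz : ((n : ℕ) : ZMod (N : ℕ)) = 0 := by exact_mod_cast ZMod.natCast_self n
        rw [hz, zero_mul]
      rw [h2] at h1
      have : ((b.val : ℤ) : ZMod n) = 0 := h1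
      rwa [hvc] at this
    -- conclude u = 1
    have : Multiplicative.toAdd u = (0 : ZMod n × ZMod n × ZMod n) := by
      refine Prod.ext ?_ (Prod.ext ?_ ?_)
      · exact ha0
      · exact hb0
      · exact hc0
    calc u = Multiplicative.ofAdd (Multiplicative.toAdd u) := rfl
      _ = Multiplicative.ofAdd 0 := by rw [this]
      _ = 1 := ofAdd_zero
  -- surjectivity of θ
  have hθsurj : Function.Surjective θ := by
    intro q
    obtain ⟨x, rfl⟩ := QuotientGroup.mk_surjective q
    set t : ZHat := Multiplicative.toAdd (g x) with htdef
    set c : ZMod n := (t : ∀ j : ℕ+, ZMod j) N with hcdef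
    have hproj : (((((c.val : ℤ)) : ZHat)) : ∀ j : ℕ+, ZMod j) N = (t : ∀ j : ℕ+, ZMod j) N := by
      rw [ZHat.coe_intCast]
      exact (hvc c).trans hcdef
    obtain ⟨s, hs⟩ := ZHat.sub_exists N t (((c.val : ℤ)) : ZHat) hproj.symm
    obtain ⟨w, hw⟩ := hg_surj (Multiplicative.ofAdd s)
    have hker : x * (γ ^ ((c.val : ℤ)))⁻¹ * (w ^ n)⁻¹ ∈ g.ker := by
      rw [MonoidHom.mem_ker, map_mul, map_mul, map_inv, map_inv, map_zpow, map_pow, hγ, hw]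
    -- reduce to additive computation
      have hgx : g x = Multiplicative.ofAdd t := by rw [htdef, ofAdd_toAdd]
      rw [hgx, ← ofAdd_zsmul, ← ofAdd_nsmul, ← ofAdd_neg, ← ofAdd_neg, ← ofAdd_add, ← ofAdd_add]
      rw [← ofAdd_zero]
      congr 1
      rw [zsmul_eq_mul, mul_one, nsmul_eq_mul, hs, ← hNn]
      ring
    rw [← hexact] at hker
    obtain ⟨v, hv⟩ := hker
    set a : ZMod n := (((Multiplicative.toAdd v).1 : ZHat) : ∀ j : ℕ+, ZMod j) N with hadef
    set b : ZMod n := (((Multiplicative.toAdd v).2 : ZHat) : ∀ j : ℕ+, ZMod j) N with hbdef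
    refine ⟨Multiplicative.ofAdd ((a, b, c) : ZMod n × ZMod n × ZMod n), ?_⟩
    have hstep1 : θ (Multiplicative.ofAdd ((a, b, c) : ZMod n × ZMod n × ZMod n))
        = QuotientGroup.mk (f (Multiplicative.ofAdd (((a.val : ℤ) : ZHat), ((b.val : ℤ) : ZHat)))
            * γ ^ ((c.val : ℤ))) := rfl
    rw [hstep1]
    rw [QuotientGroup.mk_mul]
    have hstep2 : (QuotientGroup.mk (f (Multiplicative.ofAdd (((a.val : ℤ) : ZHat),
        ((b.val : ℤ) : ZHat)))) : Γ ⧸ K)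
        = QuotientGroup.mk (f (Multiplicative.ofAdd (Multiplicative.toAdd v))) := by
      apply hcongf
      · refine ZHat.sub_exists N (Multiplicative.toAdd v).1 (((a.val : ℤ)) : ZHat) ?_
        rw [ZHat.coe_intCast]
        exact ((hvc a).trans hadef).symm
      · refine ZHat.sub_exists N (Multiplicative.toAdd v).2 (((b.val : ℤ)) : ZHat) ?_
        rw [ZHat.coe_intCast]
        exact ((hvc b).trans hbdef).symm
    rw [hstep2, ofAdd_toAdd, ← QuotientGroup.mk_mul]
    have hwn : (QuotientGroup.mk (w ^ n) : Γ ⧸ K) = 1 :=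
      (QuotientGroup.eq_one_iff _).mpr (hKpow w)
    have hthis : (QuotientGroup.mk (f v * γ ^ ((c.val : ℤ)) * w ^ n) : Γ ⧸ K)
        = QuotientGroup.mk (f v * γ ^ ((c.val : ℤ))) := by
      rw [QuotientGroup.mk_mul, hwn, mul_one]
    rw [← hthis, hv]
    congr 1
    have h1 : ∀ y p r : Γ, y * p⁻¹ * r⁻¹ * p * r = y := by
      intro y p r
      simp [mul_assoc, mul_comm, mul_left_comm]
    exact h1 x (γ ^ ((c.val : ℤ))) (w ^ n)
  have hθbij : Function.Bijective θ := ⟨hθinj, hθsurj⟩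
  haveI hfinQ : Finite (Γ ⧸ K) := Finite.of_surjective θ hθsurj
  haveI : K.FiniteIndex := Subgroup.finiteIndex_of_finite_quotient
  have hKclosed : IsClosed (K : Set Γ) := by
    have : (K : Set Γ) = (fun x : Γ => x ^ n) '' Set.univ := by
      ext y
      constructor
      · rintro ⟨x, rfl⟩
        exact ⟨x, Set.mem_univ x, rfl⟩
      · rintro ⟨x, -, rfl⟩
        exact hKpow x
    rw [this]
    exact (isCompact_univ.image (continuous_pow n)).isClosed
  have hKopen : IsOpen (K : Set Γ) := Subgroup.isOpen_of_isClosed_of_finiteIndex K hKclosed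
  haveI : DiscreteTopology (Γ ⧸ K) := by
    rw [discreteTopology_iff_isOpen_singleton_one]
    have hpre : ((QuotientGroup.mk : Γ → Γ ⧸ K) ⁻¹' ({1} : Set (Γ ⧸ K))) = (K : Set Γ) := by
      ext x
      simp [QuotientGroup.eq_one_iff]
    rw [← (QuotientGroup.isQuotientMap_mk K).isOpen_preimage, hpre]
    exact hKopen
  have hcoe_one : (((1 : ZHat)) : ∀ j : ℕ+, ZMod j) N = 1 := by
    have : ((1 : ZHat) : ∀ j : ℕ+, ZMod j) = 1 := map_one ZHat.subtype
    rw [this]; rfl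
  have hcoe_zero : (((0 : ZHat)) : ∀ j : ℕ+, ZMod j) N = 0 := by
    have : ((0 : ZHat) : ∀ j : ℕ+, ZMod j) = 0 := map_zero ZHat.subtype
    rw [this]; rfl
  set θe : Multiplicative (ZMod n × ZMod n × ZMod n) ≃* Γ ⧸ K :=
    MulEquiv.ofBijective θ hθbij with hθedef
  -- the three special values of θe.symm
  have hzv : ((ZMod.val (0 : ZMod n) : ℤ)) = 0 := by simp [ZMod.val_zero]
  have hsp1 : θe.symm (QuotientGroup.mk (f (Multiplicative.ofAdd ((1 : ZHat), (0 : ZHat)))))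
      = Multiplicative.ofAdd (((1 : ZMod n), (0 : ZMod n), (0 : ZMod n))) := by
    rw [MulEquiv.symm_apply_eq]
    symm
    show (QuotientGroup.mk (f (Multiplicative.ofAdd (((((1 : ZMod n).val : ℤ)) : ZHat),
      ((((0 : ZMod n).val : ℤ)) : ZHat))) * γ ^ (((0 : ZMod n).val : ℤ))) : Γ ⧸ K) = _
    rw [hzv, zpow_zero, mul_one]
    apply hcongf
    · exact ZHat.sub_exists N 1 _ (by rw [ZHat.coe_intCast, hcoe_one]; exact (hvc 1).symm)
    · exact ⟨0, by norm_num⟩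
  have hsp2 : θe.symm (QuotientGroup.mk (f (Multiplicative.ofAdd ((0 : ZHat), (1 : ZHat)))))
      = Multiplicative.ofAdd (((0 : ZMod n), (1 : ZMod n), (0 : ZMod n))) := by
    rw [MulEquiv.symm_apply_eq]
    symm
    show (QuotientGroup.mk (f (Multiplicative.ofAdd (((((0 : ZMod n).val : ℤ)) : ZHat),
      ((((1 : ZMod n).val : ℤ)) : ZHat))) * γ ^ (((0 : ZMod n).val : ℤ))) : Γ ⧸ K) = _
    rw [hzv, zpow_zero, mul_one]
    apply hcongf
    · exact ⟨0, by norm_num⟩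
    · exact ZHat.sub_exists N 1 _ (by rw [ZHat.coe_intCast, hcoe_one]; exact (hvc 1).symm)
  have hsp3 : θe.symm (QuotientGroup.mk γ)
      = Multiplicative.ofAdd (((0 : ZMod n), (0 : ZMod n), (1 : ZMod n))) := by
    rw [MulEquiv.symm_apply_eq]
    symm
    show (QuotientGroup.mk (f (Multiplicative.ofAdd (((((0 : ZMod n).val : ℤ)) : ZHat),
      ((((0 : ZMod n).val : ℤ)) : ZHat))) * γ ^ (((1 : ZMod n).val : ℤ))) : Γ ⧸ K) = _
    rw [hzv]
    have hf1 : f (Multiplicative.ofAdd ((((0 : ℤ) : ZHat)), (((0 : ℤ) : ZHat)))) = 1 := by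
      have h00 : (Multiplicative.ofAdd ((((0 : ℤ) : ZHat)), (((0 : ℤ) : ZHat))))
          = (1 : Multiplicative (ZHat × ZHat)) := by
        rw [Int.cast_zero]
        exact ofAdd_zero
      rw [h00, map_one]
    rw [hf1, one_mul, hcongγ (((1 : ZMod n).val : ℤ)) 1 (by rw [hvc]; norm_num), zpow_one]
  -- the equivalence
  set Φfun : ContinuousMonoidHom Γ (Multiplicative (ZMod n))
      → Multiplicative (ZMod n × ZMod n × ZMod n) := fun φ =>
    Multiplicative.ofAdd
      ((⟨Multiplicative.toAdd (φ (f (Multiplicative.ofAdd ((1 : ZHat), (0 : ZHat))))),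
        Multiplicative.toAdd (φ (f (Multiplicative.ofAdd ((0 : ZHat), (1 : ZHat))))),
        Multiplicative.toAdd (φ γ)⟩ : ZMod n × ZMod n × ZMod n)) with hΦdef
  refine ⟨MulEquiv.ofBijective (MonoidHom.mk' Φfun ?_) ⟨?_, ?_⟩⟩
  · -- map_mul
    intro φ ψ
    rw [← ofAdd_add]
    rfl
  · -- injective
    rw [injective_iff_map_eq_one]
    intro φ hφ
    have h0 : ((⟨Multiplicative.toAdd (φ (f (Multiplicative.ofAdd ((1 : ZHat), (0 : ZHat))))),
        Multiplicative.toAdd (φ (f (Multiplicative.ofAdd ((0 : ZHat), (1 : ZHat))))),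
        Multiplicative.toAdd (φ γ)⟩ : ZMod n × ZMod n × ZMod n)
        = (0 : ZMod n × ZMod n × ZMod n)) := congrArg Multiplicative.toAdd hφ
    have h1 : φ (f (Multiplicative.ofAdd ((1 : ZHat), (0 : ZHat)))) = 1 := by
      have := congrArg Prod.fst h0
      simpa using congrArg Multiplicative.ofAdd this
    have h2 : φ (f (Multiplicative.ofAdd ((0 : ZHat), (1 : ZHat)))) = 1 := by
      have := congrArg (fun p => p.2.1) h0
      simpa using congrArg Multiplicative.ofAdd this
    have h3 : φ γ = 1 := by
      have := congrArg (fun p => p.2.2) h0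
      simpa using congrArg Multiplicative.ofAdd this
    -- φ∘f is trivial
    set D : Subgroup (Multiplicative (ZHat × ZHat)) :=
      MonoidHom.ker ((φ : Γ →* Multiplicative (ZMod n)).comp f) with hDdef
    have hDclosed : IsClosed (D : Set (Multiplicative (ZHat × ZHat))) := by
      have : (D : Set (Multiplicative (ZHat × ZHat)))
          = (fun z => φ (f z)) ⁻¹' ({1} : Set (Multiplicative (ZMod n))) := by
        ext z
        simp [hDdef, MonoidHom.mem_ker]
      rw [this]
      exact IsClosed.preimage (φ.continuous.comp hf_cont) isClosed_singleton
    have hDtop : D = ⊤ := ZHat.mult_subgroup2_eq_top D hDclosed h1 h2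
    have hfz : ∀ z, φ (f z) = 1 := by
      intro z
      have : z ∈ D := hDtop ▸ Subgroup.mem_top z
      exact this
    -- kernel of φ is everything
    set H : Subgroup Γ := MonoidHom.ker (φ : Γ →* Multiplicative (ZMod n)) with hHdef
    have hHclosed : IsClosed (H : Set Γ) := by
      have : (H : Set Γ) = (φ : Γ → Multiplicative (ZMod n)) ⁻¹' {1} := by
        ext x; simp [hHdef, MonoidHom.mem_ker]
      rw [this]
      exact IsClosed.preimage φ.continuous isClosed_singleton
    have hHker : g.ker ≤ H := by
      intro x hx
      rw [← hexact] at hx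
      obtain ⟨z, rfl⟩ := hx
      exact hfz z
    have hall := hL H hHclosed hHker h3
    ext x
    exact hall x
  · -- surjective
    intro u
    set A : ZMod n := (Multiplicative.toAdd u).1 with hA
    set B : ZMod n := (Multiplicative.toAdd u).2.1 with hB
    set C : ZMod n := (Multiplicative.toAdd u).2.2 with hC
    set χ : Multiplicative (ZMod n × ZMod n × ZMod n) →* Multiplicative (ZMod n) :=
      MonoidHom.mk' (fun v => Multiplicative.ofAdd
        (A * (Multiplicative.toAdd v).1 + B * (Multiplicative.toAdd v).2.1
          + C * (Multiplicative.toAdd v).2.2)) (by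
        intro v w
        rw [← ofAdd_add]
        congr 1
        show A * ((Multiplicative.toAdd v).1 + (Multiplicative.toAdd w).1)
            + B * ((Multiplicative.toAdd v).2.1 + (Multiplicative.toAdd w).2.1)
            + C * ((Multiplicative.toAdd v).2.2 + (Multiplicative.toAdd w).2.2)
          = (A * (Multiplicative.toAdd v).1 + B * (Multiplicative.toAdd v).2.1
              + C * (Multiplicative.toAdd v).2.2)
            + (A * (Multiplicative.toAdd w).1 + B * (Multiplicative.toAdd w).2.1
              + C * (Multiplicative.toAdd w).2.2)
        ring) with hχdef
    set φ₀ : Γ →* Multiplicative (ZMod n) :=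
      (χ.comp (θe.symm : Γ ⧸ K →* Multiplicative (ZMod n × ZMod n × ZMod n))).comp
        (QuotientGroup.mk' K) with hφ₀def
    have hφ₀cont : Continuous φ₀ := by
      have : (φ₀ : Γ → Multiplicative (ZMod n))
          = (fun q : Γ ⧸ K => χ (θe.symm q)) ∘ (QuotientGroup.mk : Γ → Γ ⧸ K) := rfl
      rw [this]
      exact continuous_of_discreteTopology.comp (QuotientGroup.isQuotientMap_mk K).continuous
    refine ⟨⟨φ₀, hφ₀cont⟩, ?_⟩
    have hval : ∀ x : Γ, (⟨φ₀, hφ₀cont⟩ : ContinuousMonoidHom Γ (Multiplicative (ZMod n))) x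
        = χ (θe.symm (QuotientGroup.mk x)) := fun x => rfl
    rw [← ofAdd_toAdd u]
    congr 1
    refine Prod.ext ?_ (Prod.ext ?_ ?_)
    · show Multiplicative.toAdd (χ (θe.symm (QuotientGroup.mk
        (f (Multiplicative.ofAdd ((1 : ZHat), (0 : ZHat))))))) = A
      rw [hsp1]
      show A * 1 + B * 0 + C * 0 = A
      ring
    · show Multiplicative.toAdd (χ (θe.symm (QuotientGroup.mk
        (f (Multiplicative.ofAdd ((0 : ZHat), (1 : ZHat))))))) = B
      rw [hsp2]
      show A * 0 + B * 1 + C * 0 = B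
      ring
    · show Multiplicative.toAdd (χ (θe.symm (QuotientGroup.mk γ))) = C
      rw [hsp3]
      show A * 0 + B * 0 + C * 1 = C
      ring
end

section
/- In the group B = ⟨a, b | a³, b³, (ab)³⟩, with x = a⁻¹b, y = ba⁻¹, u = y⁻¹x, v = x³, for all integers r, s the identity a·u^r·v^s = (y^{-r-s} x^s)⁻¹ · a · (y^{-r-s} x^s) holds; i.e., a u^r v^s is conjugate to a. -/
namespace Triangle333

/-- Relations of the (3,3,3) triangle group `⟨a, b ∣ a³, b³, (ab)³⟩`. -/
def rels : Set (FreeGroup (Fin 2)) :=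
  {(FreeGroup.of 0) ^ 3, (FreeGroup.of 1) ^ 3, (FreeGroup.of 0 * FreeGroup.of 1) ^ 3}

/-- The (3,3,3) Euclidean triangle group `B = ⟨a, b ∣ a³, b³, (ab)³⟩`. -/
abbrev B : Type := PresentedGroup rels

def a : B := PresentedGroup.of 0
def b : B := PresentedGroup.of 1
def x : B := a⁻¹ * b
def y : B := b * a⁻¹
def u : B := y⁻¹ * x
def v : B := x ^ 3

end Triangle333

namespace Triangle333

/-- Key identity, proved in an arbitrary group from the three relations. -/
theorem key {G : Type*} [Group G] (a b : G)
    (ha : a ^ 3 = 1) (hb : b ^ 3 = 1) (hab : (a * b) ^ 3 = 1) (r s : ℤ) :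
    a * ((b * a⁻¹)⁻¹ * (a⁻¹ * b)) ^ r * ((a⁻¹ * b) ^ 3) ^ s
      = ((b * a⁻¹) ^ (-r - s) * (a⁻¹ * b) ^ s)⁻¹ * a
          * ((b * a⁻¹) ^ (-r - s) * (a⁻¹ * b) ^ s) := by
  rw [pow_succ, pow_succ, pow_one] at ha hb hab
  -- ha : a * a * a = 1, etc.
  set x := a⁻¹ * b with hx
  set y := b * a⁻¹ with hy
  have haa : a⁻¹ * a⁻¹ = a := by
    calc a⁻¹ * a⁻¹ = a⁻¹ * a⁻¹ * (a * a * a) := by rw [ha, mul_one]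
      _ = a := by group
  have haa2 : a * a = a⁻¹ := by
    calc a * a = a * a * a * a⁻¹ := by group
      _ = a⁻¹ := by rw [ha, one_mul]
  have hbb : b * b = b⁻¹ := by
    calc b * b = b * b * b * b⁻¹ := by group
      _ = b⁻¹ := by rw [hb, one_mul]
  have hba : b * a * (b * a) * (b * a) = 1 := by
    calc b * a * (b * a) * (b * a) = a⁻¹ * (a * b * (a * b) * (a * b)) * a := by group
      _ = 1 := by rw [hab]; group
  have hxy1 : x * y = a⁻¹ * b⁻¹ * a⁻¹ := by
    calc x * y = a⁻¹ * (b * b) * a⁻¹ := by rw [hx, hy]; group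
      _ = a⁻¹ * b⁻¹ * a⁻¹ := by rw [hbb, mul_assoc]
  have hkey : a⁻¹ * b⁻¹ * a⁻¹ = b * a * b := by
    calc a⁻¹ * b⁻¹ * a⁻¹ = (b * a * (b * a) * (b * a))⁻¹ * (b * a * b) := by group
      _ = b * a * b := by rw [hba, inv_one, one_mul]
  have hxy : x * y = y * x := by
    calc x * y = b * a * b := by rw [hxy1, hkey]
      _ = b * (a⁻¹ * a⁻¹) * b := by rw [haa]
      _ = y * x := by rw [hx, hy]; group
  have Cxy : Commute x y := hxy
  have S1 : ∀ k : ℤ, a * x ^ k = y ^ k * a := by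
    intro k
    have h : SemiconjBy a x y := by
      show a * x = y * a
      rw [hx, hy]; group
    exact SemiconjBy.zpow_right h k
  have S2 : ∀ k : ℤ, a * y ^ k = x ^ (-k) * y ^ (-k) * a := by
    intro k
    have h : SemiconjBy a y (y⁻¹ * x⁻¹) := by
      show a * y = y⁻¹ * x⁻¹ * a
      rw [show y⁻¹ * x⁻¹ = (x * y)⁻¹ from (mul_inv_rev x y).symm, hxy1, hy]
      calc a * (b * a⁻¹) = a * b * (a⁻¹ * a⁻¹) * a := by group
        _ = a * b * a * a := by rw [haa]
        _ = (a⁻¹ * b⁻¹ * a⁻¹)⁻¹ * a := by group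
    have h2 := SemiconjBy.zpow_right h k
    have h3 : (y⁻¹ * x⁻¹) ^ k = x ^ (-k) * y ^ (-k) := by
      rw [← mul_inv_rev, inv_zpow', Commute.mul_zpow Cxy]
    rw [← h3]
    exact h2
  have mulc : ∀ m n m' n' : ℤ, (x ^ m * y ^ n) * (x ^ m' * y ^ n')
      = x ^ (m + m') * y ^ (n + n') := by
    intro m n m' n'
    have hc : y ^ n * x ^ m' = x ^ m' * y ^ n := (Cxy.symm.zpow_zpow n m').eq
    rw [zpow_add, zpow_add, mul_assoc, ← mul_assoc (y ^ n), hc]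
    group
  have ac : ∀ m n : ℤ, a * (x ^ m * y ^ n) = x ^ (-n) * y ^ (m - n) * a := by
    intro m n
    calc a * (x ^ m * y ^ n) = (a * x ^ m) * y ^ n := by rw [mul_assoc]
      _ = y ^ m * (a * y ^ n) := by rw [S1, mul_assoc]
      _ = y ^ m * (x ^ (-n) * y ^ (-n) * a) := by rw [S2]
      _ = (x ^ (0:ℤ) * y ^ m) * (x ^ (-n) * y ^ (-n)) * a := by
            rw [zpow_zero, one_mul]; group
      _ = x ^ (0 + -n) * y ^ (m + -n) * a := by rw [mulc]
      _ = x ^ (-n) * y ^ (m - n) * a := by rw [zero_add, ← sub_eq_add_neg]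
  have hu : (y⁻¹ * x) ^ r = x ^ r * y ^ (-r) := by
    have hyx : y⁻¹ * x = x * y⁻¹ := (Cxy.symm.inv_left).eq
    rw [hyx, Commute.mul_zpow Cxy.inv_right, inv_zpow']
  have hv : (x ^ 3) ^ s = x ^ (3 * s) := by
    rw [← zpow_natCast x 3, ← zpow_mul]
    norm_num
  have hlhs : a * (y⁻¹ * x) ^ r * (x ^ 3) ^ s = x ^ r * y ^ (2 * r + 3 * s) * a := by
    calc a * (y⁻¹ * x) ^ r * (x ^ 3) ^ s
        = a * ((x ^ r * y ^ (-r)) * (x ^ (3 * s) * y ^ (0:ℤ))) := by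
          rw [hu, hv, zpow_zero, mul_one, mul_assoc]
      _ = a * (x ^ (r + 3 * s) * y ^ (-r + 0)) := by rw [mulc]
      _ = x ^ (-(-r + 0)) * y ^ ((r + 3 * s) - (-r + 0)) * a := by rw [ac]
      _ = x ^ r * y ^ (2 * r + 3 * s) * a := by
          rw [show -(-r + 0) = r by ring, show (r + 3 * s) - (-r + 0) = 2 * r + 3 * s by ring]
  have hw : y ^ (-r - s) * x ^ s = x ^ s * y ^ (-r - s) := (Cxy.symm.zpow_zpow _ _).eq
  have hinv : (x ^ s * y ^ (-r - s))⁻¹ = x ^ (-s) * y ^ (-(-r - s)) := by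
    rw [mul_inv_rev, ← zpow_neg, ← zpow_neg]
    exact (Cxy.symm.zpow_zpow _ _).eq
  have hrhs : (y ^ (-r - s) * x ^ s)⁻¹ * a * (y ^ (-r - s) * x ^ s)
      = x ^ r * y ^ (2 * r + 3 * s) * a := by
    calc (y ^ (-r - s) * x ^ s)⁻¹ * a * (y ^ (-r - s) * x ^ s)
        = (x ^ (-s) * y ^ (-(-r - s))) * (a * (x ^ s * y ^ (-r - s))) := by
          rw [hw, hinv, mul_assoc]
      _ = (x ^ (-s) * y ^ (-(-r - s))) * (x ^ (-(-r - s)) * y ^ (s - (-r - s)) * a) := by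
          rw [ac]
      _ = (x ^ (-s) * y ^ (-(-r - s))) * (x ^ (-(-r - s)) * y ^ (s - (-r - s))) * a := by
          simp only [mul_assoc]
      _ = x ^ (-s + -(-r - s)) * y ^ (-(-r - s) + (s - (-r - s))) * a := by rw [mulc]
      _ = x ^ r * y ^ (2 * r + 3 * s) * a := by
          rw [show -s + -(-r - s) = r by ring,
            show -(-r - s) + (s - (-r - s)) = 2 * r + 3 * s by ring]
  rw [hlhs, hrhs]

theorem a_cube : a ^ 3 = 1 := by
  have hmem : ((FreeGroup.of 0 : FreeGroup (Fin 2)) ^ 3) ∈ Subgroup.normalClosure rels :=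
    Subgroup.subset_normalClosure (Set.mem_insert _ _)
  calc a ^ 3 = PresentedGroup.mk rels ((FreeGroup.of 0) ^ 3) := by rw [map_pow]; rfl
    _ = 1 := (QuotientGroup.eq_one_iff _).mpr hmem

theorem b_cube : b ^ 3 = 1 := by
  have hmem : ((FreeGroup.of 1 : FreeGroup (Fin 2)) ^ 3) ∈ Subgroup.normalClosure rels :=
    Subgroup.subset_normalClosure (Set.mem_insert_of_mem _ (Set.mem_insert _ _))
  calc b ^ 3 = PresentedGroup.mk rels ((FreeGroup.of 1) ^ 3) := by rw [map_pow]; rfl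
    _ = 1 := (QuotientGroup.eq_one_iff _).mpr hmem

theorem ab_cube : (a * b) ^ 3 = 1 := by
  have hmem : ((FreeGroup.of 0 * FreeGroup.of 1 : FreeGroup (Fin 2)) ^ 3)
      ∈ Subgroup.normalClosure rels :=
    Subgroup.subset_normalClosure (Set.mem_insert_of_mem _ (Set.mem_insert_of_mem _ rfl))
  calc (a * b) ^ 3 = PresentedGroup.mk rels ((FreeGroup.of 0 * FreeGroup.of 1) ^ 3) := by
        rw [map_pow, map_mul]; rfl
    _ = 1 := (QuotientGroup.eq_one_iff _).mpr hmem

/-- In the (3,3,3) triangle group, `a·uʳ·vˢ = (y^{-r-s}xˢ)⁻¹ · a · (y^{-r-s}xˢ)`;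
in particular `a·uʳ·vˢ` is conjugate to `a`. -/
theorem a_mul_u_zpow_mul_v_zpow_conj (r s : ℤ) :
    a * u ^ r * v ^ s = (y ^ (-r - s) * x ^ s)⁻¹ * a * (y ^ (-r - s) * x ^ s) := by
  have h := key a b a_cube b_cube ab_cube r s
  simpa [u, v, x, y] using h

end Triangle333
end
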